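/- arXiv:math-ph/0504039 — 4 statements merged into one kernel-verified Lean document; each statement's English description precedes it below -/
import Mathlib

section
/- Let z ∈ ℂ, let w ∈ ℂ with w² = z and w ≠ 0, let L > 0, and let R : [0, L] → ℂ be differentiable with R'(l) + z + R(l)² = 0 for all l ∈ [0, L]. If cos(w l) + R(0)·sin(w l)/w ≠ 0 for all l ∈ [0, L], then for all l ∈ [0, L], R(l) = ( R(0)·cos(w l) − w·sin(w l) ) / ( cos(w l) + R(0)·sin(w l)/w ). -/
open Set Complex

/-- The Möbius transformation (A.5) integrates the Riccati equation
`R' + z + R² = 0`: if `R` solves the Riccati equation on `[0,L]` and the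
denominator `cos(w l) + R(0)·sin(w l)/w` never vanishes, then
`R(l) = (R(0)·cos(w l) - w·sin(w l)) / (cos(w l) + R(0)·sin(w l)/w)`. -/
theorem moebius_integrates_riccati
    (z w : ℂ) (hw : w ^ 2 = z) (hw0 : w ≠ 0) (L : ℝ) (hL : 0 < L)
    (R : ℝ → ℂ)
    (hRic : ∀ l ∈ Icc (0 : ℝ) L,
      HasDerivWithinAt R (-(z + R l ^ 2)) (Icc 0 L) l)
    (hden : ∀ l ∈ Icc (0 : ℝ) L,
      Complex.cos (w * l) + R 0 * Complex.sin (w * l) / w ≠ 0) :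
    ∀ l ∈ Icc (0 : ℝ) L,
      R l = (R 0 * Complex.cos (w * l) - w * Complex.sin (w * l)) /
        (Complex.cos (w * l) + R 0 * Complex.sin (w * l) / w) := by
  set u : ℝ → ℂ := fun l => Complex.cos (w * l) + R 0 * Complex.sin (w * l) / w with hu_def
  set v : ℝ → ℂ := fun l => R 0 * Complex.cos (w * l) - w * Complex.sin (w * l) with hv_def
  have hwl : ∀ l : ℝ, HasDerivAt (fun t : ℝ => w * (t : ℂ)) w l := by
    intro l
    simpa using ((hasDerivAt_id l).ofReal_comp.const_mul w)
  have hcos : ∀ l : ℝ, HasDerivAt (fun t : ℝ => Complex.cos (w * t))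
      (-Complex.sin (w * l) * w) l := fun l => by
    exact
      (Complex.hasDerivAt_cos (w * l)).comp l (hwl l)
  have hsin : ∀ l : ℝ, HasDerivAt (fun t : ℝ => Complex.sin (w * t))
      (Complex.cos (w * l) * w) l := fun l => by
    exact
      (Complex.hasDerivAt_sin (w * l)).comp l (hwl l)
  have hu : ∀ l : ℝ, HasDerivAt u (v l) l := by
    intro l
    have := (hcos l).add (((hsin l).const_mul (R 0)).div_const w)
    convert this using 1
    · rfl
    · rfl
    field_simp [hv_def]
    ring
  have hv : ∀ l : ℝ, HasDerivAt v (-z * u l) l := by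
    intro l
    have := ((hcos l).const_mul (R 0)).sub ((hsin l).const_mul w)
    convert this using 1
    · rfl
    · rfl
    rw [← hw]
    simp only [hu_def]
    field_simp [hu_def]
    ring
  set φ : ℝ → ℂ := fun l => R l * u l - v l with hφ_def
  have hφ : ∀ l ∈ Icc (0 : ℝ) L, HasDerivWithinAt φ (-R l * φ l) (Icc 0 L) l := by
    intro l hl
    have := ((hRic l hl).mul (hu l).hasDerivWithinAt).sub (hv l).hasDerivWithinAt
    convert this using 1
    · rfl
    · rfl
    simp only [hφ_def]
    rw [← hw]
    ring
  have hφcont : ContinuousOn φ (Icc 0 L) := fun l hl => (hφ l hl).continuousWithinAt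
  have hRcont : ContinuousOn R (Icc 0 L) := fun l hl => (hRic l hl).continuousWithinAt
  obtain ⟨K, hK⟩ := isCompact_Icc.exists_bound_of_continuousOn hRcont
  have hφ0 : φ 0 = 0 := by simp [hφ_def, hu_def, hv_def]
  have key : ∀ x ∈ Icc (0 : ℝ) L, ‖φ x‖ ≤ gronwallBound 0 (max K 0) 0 (x - 0) := by
    apply norm_le_gronwallBound_of_norm_deriv_right_le hφcont
    · intro x hx
      have hmem : Icc (0 : ℝ) L ∈ nhdsWithin x (Ici x) := by
        apply Filter.mem_of_superset (Icc_mem_nhdsGE_of_mem ⟨le_refl x, hx.2⟩)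
        exact Icc_subset_Icc hx.1 le_rfl
      exact (hφ x (Ico_subset_Icc_self hx)).mono_of_mem_nhdsWithin hmem
    · simp [hφ0]
    · intro x hx
      have h1 : ‖-R x * φ x‖ = ‖R x‖ * ‖φ x‖ := by
        rw [norm_mul, norm_neg]
      rw [h1, add_zero]
      exact mul_le_mul_of_nonneg_right
        (le_trans (hK x (Ico_subset_Icc_self hx)) (le_max_left _ _)) (norm_nonneg _)
  have hφzero : ∀ x ∈ Icc (0 : ℝ) L, φ x = 0 := by
    intro x hx
    have := key x hx
    rw [gronwallBound_ε0] at this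
    simp at this
    exact norm_le_zero_iff.mp (by simpa using this)
  intro l hl
  have h := hφzero l hl
  have hd := hden l hl
  rw [hφ_def] at h
  have : R l * u l = v l := by linear_combination h
  rw [eq_div_iff hd]
  exact this
end

section
/- Let z ∈ ℂ, let w ∈ ℂ with w² = z and w ≠ 0, let L > 0, and let ψ : [0, L] → ℂ be twice continuously differentiable with ψ''(l) = −z·ψ(l) for all l ∈ [0, L]. Assume ψ(0) ≠ 0 and ψ(L) ≠ 0, and set R₀ := ψ'(0)/ψ(0) and R_L := ψ'(L)/ψ(L). Then e^{−√|z|·L}·(1 + |R_L|/√|z|)^{−1} ≤ |ψ(L)/ψ(0)| ≤ e^{√|z|·L}·(1 + |R₀|/√|z|). -/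
open Set Complex

/-- Grönwall on a closed interval, with derivatives within the interval. -/
lemma gronwall_Icc {E : Type*} [NormedAddCommGroup E] [NormedSpace ℝ E]
    {f f' : ℝ → E} {K a b : ℝ} (hab : a ≤ b)
    (hf : ∀ x ∈ Icc a b, HasDerivWithinAt f (f' x) (Icc a b) x)
    (bound : ∀ x ∈ Icc a b, ‖f' x‖ ≤ K * ‖f x‖) :
    ‖f b‖ ≤ ‖f a‖ * Real.exp (K * (b - a)) := by
  have hcont : ContinuousOn f (Icc a b) := fun x hx => (hf x hx).continuousWithinAt
  have h := norm_le_gronwallBound_of_norm_deriv_right_le (f := f) (f' := f')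
      (δ := ‖f a‖) (K := K) (ε := 0) (a := a) (b := b) hcont
      (fun x hx => (hf x (Ico_subset_Icc_self hx)).mono_of_mem_nhdsWithin
        (Icc_mem_nhdsGE_of_mem hx))
      le_rfl
      (fun x hx => by simpa using bound x (Ico_subset_Icc_self hx))
  have := h b (right_mem_Icc.2 hab)
  rwa [gronwallBound_ε0] at this

/-- The two-sided exponential bound (A.7): for a `C²` solution of `ψ'' = -z ψ`
on `[0,L]` with `ψ(0) ≠ 0`, `ψ(L) ≠ 0`, setting `R₀ = ψ'(0)/ψ(0)` and
`R_L = ψ'(L)/ψ(L)`,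
`e^{-√|z| L}·(1 + |R_L|/√|z|)⁻¹ ≤ |ψ(L)/ψ(0)| ≤ e^{√|z| L}·(1 + |R₀|/√|z|)`. -/
theorem free_schroedinger_exponential_bounds
    (z w : ℂ) (hw : w ^ 2 = z) (hw0 : w ≠ 0) (L : ℝ) (hL : 0 < L)
    (ψ ψ' ψ'' : ℝ → ℂ)
    (hderiv : ∀ l ∈ Icc (0 : ℝ) L, HasDerivWithinAt ψ (ψ' l) (Icc 0 L) l)
    (hderiv' : ∀ l ∈ Icc (0 : ℝ) L, HasDerivWithinAt ψ' (ψ'' l) (Icc 0 L) l)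
    (hcont : ContinuousOn ψ'' (Icc 0 L))
    (hODE : ∀ l ∈ Icc (0 : ℝ) L, ψ'' l = -z * ψ l)
    (h0 : ψ 0 ≠ 0) (hLne : ψ L ≠ 0) :
    Real.exp (-(Real.sqrt (‖z‖) * L)) *
        (1 + ‖ψ' L / ψ L‖ / Real.sqrt (‖z‖))⁻¹ ≤
      ‖ψ L / ψ 0‖ ∧
    ‖ψ L / ψ 0‖ ≤
      Real.exp (Real.sqrt (‖z‖) * L) *
        (1 + ‖ψ' 0 / ψ 0‖ / Real.sqrt (‖z‖)) := by
  set k : ℝ := Real.sqrt (‖z‖) with hkdef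
  have hk : k = ‖w‖ := by
    rw [hkdef, ← hw, norm_pow, Real.sqrt_sq (norm_nonneg w)]
  have hkpos : 0 < k := by rw [hk]; exact norm_pos_iff.mpr hw0
  -- the vector v = (ψ, ψ'/w)
  set v : ℝ → ℂ × ℂ := fun l => (ψ l, ψ' l / w) with hv
  set v' : ℝ → ℂ × ℂ := fun l => (ψ' l, ψ'' l / w) with hv'
  have hvd : ∀ l ∈ Icc (0 : ℝ) L, HasDerivWithinAt v (v' l) (Icc 0 L) l := by
    intro l hl
    exact (hderiv l hl).prodMk ((hderiv' l hl).div_const w)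
  have hbound : ∀ l ∈ Icc (0 : ℝ) L, ‖v' l‖ ≤ k * ‖v l‖ := by
    intro l hl
    have hψ'' : ‖ψ'' l‖ = ‖w‖ ^ 2 * ‖ψ l‖ := by
      rw [hODE l hl]; rw [← hw]
      simp [norm_mul, norm_pow]
    have hwpos : (0:ℝ) < ‖w‖ := norm_pos_iff.mpr hw0
    rw [hv, hv']
    simp only [Prod.norm_def, norm_div]
    rw [hψ'', hk]
    rw [mul_max_of_nonneg _ _ hwpos.le]
    rw [max_comm]
    apply max_le_max
    · apply le_of_eq; field_simp
    · apply le_of_eq; field_simp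
  -- forward Grönwall
  have hfwd : ‖v L‖ ≤ ‖v 0‖ * Real.exp (k * L) := by
    have := gronwall_Icc hL.le hvd hbound
    simpa using this
  -- backward Grönwall
  have hbwd : ‖v 0‖ ≤ ‖v L‖ * Real.exp (k * L) := by
    have hmap : MapsTo (fun l : ℝ => L - l) (Icc 0 L) (Icc 0 L) := by
      intro x hx; constructor <;> simp at hx ⊢ <;> linarith [hx.1, hx.2]
    have hud : ∀ l ∈ Icc (0 : ℝ) L,
        HasDerivWithinAt (fun l => v (L - l)) ((-1 : ℝ) • v' (L - l)) (Icc 0 L) l := by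
      intro l hl
      exact HasDerivWithinAt.scomp l (hvd (L - l) (hmap hl))
        ((hasDerivWithinAt_id l _).const_sub L) hmap
    have hub : ∀ l ∈ Icc (0 : ℝ) L, ‖(-1 : ℝ) • v' (L - l)‖ ≤ k * ‖v (L - l)‖ := by
      intro l hl
      rw [norm_smul]; simpa using hbound (L - l) (hmap hl)
    have := gronwall_Icc hL.le (f := fun l => v (L - l)) (f' := fun l => (-1 : ℝ) • v' (L - l))
      hud hub
    simpa using this
  -- notation
  have hA0 : (0:ℝ) < ‖ψ 0‖ := norm_pos_iff.mpr h0
  have hAL : (0:ℝ) < ‖ψ L‖ := norm_pos_iff.mpr hLne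
  have hE : (0:ℝ) < Real.exp (k * L) := Real.exp_pos _
  have hnorm : ∀ l, ‖v l‖ = max (‖ψ l‖) (‖ψ' l‖ / k) := by
    intro l
    rw [hv]
    simp [Prod.norm_def, norm_div, hk]
  have hquot : ‖ψ L / ψ 0‖ = ‖ψ L‖ / ‖ψ 0‖ := norm_div _ _
  constructor
  · -- lower bound
    have key : ‖ψ 0‖ ≤
        Real.exp (k * L) * (‖ψ L‖ + ‖ψ' L‖ / k) := by
      have h1 : ‖ψ 0‖ ≤ ‖v 0‖ := by rw [hnorm]; exact le_max_left _ _
      have h2 : ‖v L‖ ≤ ‖ψ L‖ + ‖ψ' L‖ / k := by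
        rw [hnorm]
        exact max_le (le_add_of_nonneg_right (by positivity))
          (le_add_of_nonneg_left (by positivity))
      calc ‖ψ 0‖ ≤ ‖v 0‖ := h1
        _ ≤ ‖v L‖ * Real.exp (k * L) := hbwd
        _ ≤ (‖ψ L‖ + ‖ψ' L‖ / k) * Real.exp (k * L) := by
            exact mul_le_mul_of_nonneg_right h2 hE.le
        _ = _ := by ring
    rw [hquot, Real.exp_neg, norm_div, le_div_iff₀ hA0]
    have hc : (0:ℝ) < 1 + ‖ψ' L‖ / ‖ψ L‖ / k := by positivity
    have heq : Real.exp (k * L) * (‖ψ L‖ + ‖ψ' L‖ / k) =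
        (Real.exp (k * L) * (1 + ‖ψ' L‖ / ‖ψ L‖ / k)) *
          ‖ψ L‖ := by
      field_simp
    calc (Real.exp (k * L))⁻¹ * (1 + ‖ψ' L‖ / ‖ψ L‖ / k)⁻¹ *
          ‖ψ 0‖
        ≤ (Real.exp (k * L))⁻¹ * (1 + ‖ψ' L‖ / ‖ψ L‖ / k)⁻¹ *
          ((Real.exp (k * L) * (1 + ‖ψ' L‖ / ‖ψ L‖ / k)) *
            ‖ψ L‖) := by
          apply mul_le_mul_of_nonneg_left _ (by positivity)
          rw [← heq]; exact key
      _ = ‖ψ L‖ := by field_simp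
  · -- upper bound
    have key : ‖ψ L‖ ≤
        Real.exp (k * L) * (‖ψ 0‖ + ‖ψ' 0‖ / k) := by
      have h1 : ‖ψ L‖ ≤ ‖v L‖ := by rw [hnorm]; exact le_max_left _ _
      have h2 : ‖v 0‖ ≤ ‖ψ 0‖ + ‖ψ' 0‖ / k := by
        rw [hnorm]
        exact max_le (le_add_of_nonneg_right (by positivity))
          (le_add_of_nonneg_left (by positivity))
      calc ‖ψ L‖ ≤ ‖v L‖ := h1
        _ ≤ ‖v 0‖ * Real.exp (k * L) := hfwd
        _ ≤ (‖ψ 0‖ + ‖ψ' 0‖ / k) * Real.exp (k * L) := by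
            exact mul_le_mul_of_nonneg_right h2 hE.le
        _ = _ := by ring
    rw [hquot, norm_div, div_le_iff₀ hA0]
    calc ‖ψ L‖ ≤ Real.exp (k * L) * (‖ψ 0‖ + ‖ψ' 0‖ / k) :=
          key
      _ = Real.exp (k * L) * (1 + ‖ψ' 0‖ / ‖ψ 0‖ / k) *
            ‖ψ 0‖ := by
          field_simp
end

section
/- Let w ∈ ℂ with Im w > 0, let L > 0, and let R ∈ ℂ with R ≠ −i w. If |(R − i w)/(R + i w)| ≤ e^{−2 L · Im w}, then |R| ≤ 2|w| / (1 − e^{−2 L · Im w}). -/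
open Complex

/-- The a priori bound (A.2): if `Im w > 0`, `L > 0`, `R ≠ -i w` and the disk
variable `m = (R - i w)/(R + i w)` satisfies `|m| ≤ e^{-2 L Im w}`, then
`|R| ≤ 2|w|/(1 - e^{-2 L Im w})`. -/
theorem bound_R_of_bound_m (w : ℂ) (hw : 0 < w.im) (L : ℝ) (hL : 0 < L)
    (R : ℂ) (hR : R ≠ -Complex.I * w)
    (hm : ‖(R - Complex.I * w) / (R + Complex.I * w)‖ ≤
      Real.exp (-2 * L * w.im)) :
    ‖R‖ ≤ 2 * ‖w‖ / (1 - Real.exp (-2 * L * w.im)) := by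
  set q : ℝ := Real.exp (-2 * L * w.im) with hqdef
  have hq0 : 0 < q := Real.exp_pos _
  have hq1 : q < 1 := by
    rw [hqdef]
    rw [Real.exp_lt_one_iff]
    nlinarith
  have hden : R + Complex.I * w ≠ 0 := by
    intro h
    apply hR
    linear_combination h
  have hineq : ‖R - Complex.I * w‖ ≤ q * ‖R + Complex.I * w‖ := by
    rw [norm_div] at hm
    have := norm_pos_iff.mpr hden
    calc ‖R - Complex.I * w‖
        = ‖R - Complex.I * w‖ / ‖R + Complex.I * w‖
          * ‖R + Complex.I * w‖ := by field_simp
      _ ≤ q * ‖R + Complex.I * w‖ := by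
          exact mul_le_mul_of_nonneg_right hm this.le
  have h1 : ‖R‖ - ‖Complex.I * w‖ ≤ ‖R - Complex.I * w‖ :=
    norm_sub_norm_le R (Complex.I * w)
  have h2 : ‖R + Complex.I * w‖ ≤ ‖R‖ + ‖Complex.I * w‖ :=
    norm_add_le _ _
  have hIw : ‖Complex.I * w‖ = ‖w‖ := by
    simp
  rw [hIw] at h1 h2
  have hRnn := norm_nonneg R
  have hwnn := norm_nonneg w
  rw [le_div_iff₀ (by linarith)]
  nlinarith [mul_le_mul_of_nonneg_left h2 hq0.le]
end

section
/- Let z ∈ ℂ, let w ∈ ℂ with w² = z, w ≠ 0 and Im w > 0, let L > 0, and let ψ : [0, L] → ℂ be twice continuously differentiable with ψ''(l) = −z·ψ(l) for all l ∈ [0, L]. If |ψ'(L) − i w·ψ(L)| ≤ |ψ'(L) + i w·ψ(L)|, then |ψ'(0) − i w·ψ(0)| ≤ e^{−2 L · Im w} · |ψ'(0) + i w·ψ(0)|. -/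
open Set Complex

/-- Lemma A.2(i): for a `C²` solution of `ψ'' = -z ψ` on `[0,L]` with
`w² = z`, `w ≠ 0`, `Im w > 0`, if `|ψ'(L) - i w ψ(L)| ≤ |ψ'(L) + i w ψ(L)|`
then `|ψ'(0) - i w ψ(0)| ≤ e^{-2 L Im w}·|ψ'(0) + i w ψ(0)|`. -/
theorem disk_variable_contraction
    (z w : ℂ) (hw : w ^ 2 = z) (hw0 : w ≠ 0) (hwim : 0 < w.im)
    (L : ℝ) (hL : 0 < L) (ψ ψ' ψ'' : ℝ → ℂ)
    (hderiv : ∀ l ∈ Icc (0 : ℝ) L, HasDerivWithinAt ψ (ψ' l) (Icc 0 L) l)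
    (hderiv' : ∀ l ∈ Icc (0 : ℝ) L, HasDerivWithinAt ψ' (ψ'' l) (Icc 0 L) l)
    (hcont : ContinuousOn ψ'' (Icc 0 L))
    (hODE : ∀ l ∈ Icc (0 : ℝ) L, ψ'' l = -z * ψ l)
    (hend : ‖ψ' L - Complex.I * w * ψ L‖ ≤
      ‖ψ' L + Complex.I * w * ψ L‖) :
    ‖ψ' 0 - Complex.I * w * ψ 0‖ ≤
      Real.exp (-2 * L * w.im) * ‖ψ' 0 + Complex.I * w * ψ 0‖ := by
  have key : ∀ c : ℂ, c ^ 2 = -z →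
      (ψ' L - c * ψ L) * Complex.exp (c * L) = ψ' 0 - c * ψ 0 := by
    intro c hc
    have hder : ∀ l ∈ Icc (0:ℝ) L,
        HasDerivWithinAt (fun l : ℝ => (ψ' l - c * ψ l) * Complex.exp (c * l))
          0 (Icc 0 L) l := by
      intro l hl
      have h1 : HasDerivWithinAt (fun l : ℝ => ψ' l - c * ψ l)
          (ψ'' l - c * ψ' l) (Icc 0 L) l :=
        (hderiv' l hl).sub ((hderiv l hl).const_mul c)
      have h2 : HasDerivWithinAt (fun l : ℝ => Complex.exp (c * l))
          (Complex.exp (c * l) * c) (Icc 0 L) l := by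
        have h3 : HasDerivAt (fun x : ℂ => Complex.exp (c * x))
            (Complex.exp (c * (l : ℂ)) * c) (l : ℂ) :=
          ((hasDerivAt_id (l : ℂ)).const_mul c).cexp.congr_deriv (by simp only [id_eq, mul_one])
        exact h3.comp_ofReal.hasDerivWithinAt
      have h := h1.mul h2
      refine HasDerivWithinAt.congr_deriv h ?_
      rw [hODE l hl, show z = -c^2 from by rw [hc]; ring]
      ring
    have hb := norm_image_sub_le_of_norm_deriv_le_segment' hder
      (C := 0) (fun x hx => by simp) L (right_mem_Icc.2 hL.le)
    simp only [zero_mul, norm_le_zero_iff, sub_eq_zero] at hb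
    simpa using hb
  have hu := key (Complex.I * w) (by rw [mul_pow, Complex.I_sq, ← hw]; ring)
  have hv := key (-(Complex.I * w))
    (by rw [neg_pow, mul_pow, Complex.I_sq, ← hw]; ring)
  simp only [neg_mul, sub_neg_eq_add] at hv
  have e1 : ‖Complex.exp (Complex.I * w * L)‖ =
      Real.exp (-(w.im * L)) := by
    rw [Complex.norm_exp]; congr 1; simp [Complex.mul_re]
  have e2 : ‖Complex.exp (-(Complex.I * w * L))‖ =
      Real.exp (w.im * L) := by
    rw [Complex.norm_exp]; congr 1; simp [Complex.mul_re]
  have hu' : ‖ψ' 0 - Complex.I * w * ψ 0‖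
      = ‖ψ' L - Complex.I * w * ψ L‖ * Real.exp (-(w.im * L)) := by
    rw [← hu, norm_mul, e1]
  have hv' : ‖ψ' 0 + Complex.I * w * ψ 0‖
      = ‖ψ' L + Complex.I * w * ψ L‖ * Real.exp (w.im * L) := by
    rw [← hv, norm_mul, e2]
  have hexp : Real.exp (-2 * L * w.im) * Real.exp (w.im * L)
      = Real.exp (-(w.im * L)) := by rw [← Real.exp_add]; ring_nf
  calc ‖ψ' 0 - Complex.I * w * ψ 0‖
      = ‖ψ' L - Complex.I * w * ψ L‖ * Real.exp (-(w.im * L)) := hu'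
    _ ≤ ‖ψ' L + Complex.I * w * ψ L‖ * Real.exp (-(w.im * L)) :=
        mul_le_mul_of_nonneg_right hend (Real.exp_nonneg _)
    _ = Real.exp (-2 * L * w.im) * ‖ψ' 0 + Complex.I * w * ψ 0‖ := by
        rw [hv', ← hexp]; ring
end
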